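/- Let M be a group and Γ ⊆ Z(M) a central subgroup isomorphic to ℤ such that M/Γ is finite. Then there exists a finite normal subgroup R of M such that M/R is isomorphic to ℤ. -/

import Mathlib

/-- There is a finite normal subgroup `R` (namely `R = φ.ker`) with `M ⧸ R ≃* ℤ`:
we phrase this via a surjective homomorphism onto `ℤ` with finite kernel. -/
theorem stmt_5 {M : Type*} [Group M] (Γ : Subgroup M) (hΓc : Γ ≤ Subgroup.center M)
    (hΓZ : Nonempty (Γ ≃* Multiplicative ℤ)) (hfin : Finite (M ⧸ Γ)) :
    ∃ φ : M →* Multiplicative ℤ, Function.Surjective φ ∧ Finite φ.ker := by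
  classical
  haveI : Γ.FiniteIndex := Subgroup.finiteIndex_of_finite_quotient
  obtain ⟨e⟩ := hΓZ
  set n : ℕ := Γ.index with hn_def
  have hn : n ≠ 0 := Subgroup.FiniteIndex.index_ne_zero
  -- the transfer homomorphism
  let f : M →* Multiplicative ℤ := MonoidHom.transfer e.toMonoidHom
  have key : ∀ (g : M) (k : ℕ) (g₀ : M), g₀⁻¹ * g ^ k * g₀ ∈ Γ → g₀⁻¹ * g ^ k * g₀ = g ^ k := by
    intro g k g₀ hk
    have hc := hΓc hk
    rw [Subgroup.mem_center_iff] at hc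
    have h2 : g ^ k * g₀ = (g₀⁻¹ * g ^ k * g₀) * g₀ := by
      rw [← hc g₀]; group
    exact (mul_right_cancel h2).symm
  have hf_pow : ∀ (g : M), f g = e ⟨g ^ n, MonoidHom.transfer_eq_pow_aux g (key g)⟩ := by
    intro g
    exact MonoidHom.transfer_eq_pow e.toMonoidHom g (key g)
  have hfΓ : ∀ (γ : M) (hγ : γ ∈ Γ), f γ = (e ⟨γ, hγ⟩) ^ n := by
    intro γ hγ
    rw [hf_pow γ]
    have : (⟨γ ^ n, MonoidHom.transfer_eq_pow_aux γ (key γ)⟩ : Γ) = (⟨γ, hγ⟩ : Γ) ^ n := by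
      ext; simp
    rw [this, map_pow]
  -- kernel of f intersected with Γ is trivial
  have hker : ∀ x : M, x ∈ Γ → f x = 1 → x = 1 := by
    intro x hx hfx
    rw [hfΓ x hx] at hfx
    have ht : (n : ℤ) * Multiplicative.toAdd (e ⟨x, hx⟩) = 0 := by
      have := congrArg Multiplicative.toAdd hfx
      simpa [toAdd_pow, nsmul_eq_mul] using this
    have ht' : Multiplicative.toAdd (e ⟨x, hx⟩) = 0 := by
      rcases mul_eq_zero.mp ht with h | h
      · exact absurd (by exact_mod_cast h) hn
      · exact h
    have h1 : (e ⟨x, hx⟩) = 1 := by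
      have := congrArg Multiplicative.ofAdd ht'
      simpa using this
    have h2 : (⟨x, hx⟩ : Γ) = 1 := by
      apply e.injective; simpa using h1
    simpa using congrArg Subtype.val h2
  -- a nontrivial value of f
  have hγ0 : ∃ m : M, Multiplicative.toAdd (f m) ≠ 0 := by
    refine ⟨(e.symm (Multiplicative.ofAdd 1) : Γ), ?_⟩
    rw [hfΓ _ (e.symm (Multiplicative.ofAdd 1)).2]
    have : (⟨((e.symm (Multiplicative.ofAdd 1)) : Γ), (e.symm (Multiplicative.ofAdd 1)).2⟩ : Γ)
        = e.symm (Multiplicative.ofAdd 1) := rfl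
    rw [this, MulEquiv.apply_symm_apply]
    simp [← ofAdd_nsmul]
    exact_mod_cast hn
  -- the range of f, as an AddSubgroup of ℤ
  let A : AddSubgroup ℤ := AddSubgroup.toSubgroup.symm f.range
  have hmemA : ∀ m : M, Multiplicative.toAdd (f m) ∈ A := by
    intro m
    show Multiplicative.ofAdd (Multiplicative.toAdd (f m)) ∈ f.range
    exact ⟨m, by simp⟩
  obtain ⟨a, ha⟩ := Int.subgroup_cyclic A
  have hdvd : ∀ m : M, a ∣ Multiplicative.toAdd (f m) := by
    intro m
    have := hmemA m
    rw [ha, ← AddSubgroup.zmultiples_eq_closure, AddSubgroup.mem_zmultiples_iff] at this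
    obtain ⟨k, hk⟩ := this
    exact ⟨k, by rw [← hk]; simp [smul_eq_mul, mul_comm]⟩
  have ha0 : a ≠ 0 := by
    obtain ⟨m, hm⟩ := hγ0
    intro h
    obtain ⟨k, hk⟩ := hdvd m
    rw [h] at hk; simp at hk; exact hm hk
  -- there is m₀ with f m₀ corresponding to a
  have hm0 : ∃ m₀ : M, Multiplicative.toAdd (f m₀) = a := by
    have : a ∈ A := by
      rw [ha]; exact AddSubgroup.mem_closure_singleton.mpr ⟨1, by simp⟩
    have hA : Multiplicative.ofAdd a ∈ f.range := this
    obtain ⟨m₀, hm₀⟩ := hA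
    exact ⟨m₀, by rw [hm₀]; rfl⟩
  obtain ⟨m₀, hm₀⟩ := hm0
  -- define φ = f / a
  let φ : M →* Multiplicative ℤ :=
  { toFun := fun m => Multiplicative.ofAdd (Multiplicative.toAdd (f m) / a)
    map_one' := by simp
    map_mul' := by
      intro x y
      obtain ⟨u, hu⟩ := hdvd x
      obtain ⟨v, hv⟩ := hdvd y
      have hxy : Multiplicative.toAdd (f (x * y))
          = Multiplicative.toAdd (f x) + Multiplicative.toAdd (f y) := by
        rw [map_mul]; rfl
      simp only [hxy, hu, hv, ← mul_add, Int.mul_ediv_cancel_left _ ha0, ← ofAdd_add] }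
  have hφker : ∀ m : M, φ m = 1 → f m = 1 := by
    intro m hm
    have h1 : Multiplicative.toAdd (f m) / a = 0 := by
      have := congrArg Multiplicative.toAdd hm
      simpa [φ] using this
    obtain ⟨u, hu⟩ := hdvd m
    rw [hu, Int.mul_ediv_cancel_left _ ha0] at h1
    have : Multiplicative.toAdd (f m) = 0 := by rw [hu, h1, mul_zero]
    have := congrArg Multiplicative.ofAdd this
    simpa using this
  refine ⟨φ, ?_, ?_⟩
  · intro z
    refine ⟨m₀ ^ (Multiplicative.toAdd z), ?_⟩
    have : Multiplicative.toAdd (f (m₀ ^ (Multiplicative.toAdd z)))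
        = (Multiplicative.toAdd z) * a := by
      rw [map_zpow]
      rw [show Multiplicative.toAdd (f m₀ ^ Multiplicative.toAdd z)
          = (Multiplicative.toAdd z) * Multiplicative.toAdd (f m₀) by
        simp [toAdd_zpow, mul_comm], hm₀]
    show Multiplicative.ofAdd (Multiplicative.toAdd (f (m₀ ^ (Multiplicative.toAdd z))) / a) = z
    rw [this, Int.mul_ediv_cancel _ ha0]
    simp
  · -- kernel is finite: it injects into M ⧸ Γ
    have hinj : Function.Injective (fun x : φ.ker => (QuotientGroup.mk x.1 : M ⧸ Γ)) := by
      intro x y hxy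
      simp only [QuotientGroup.eq] at hxy
      have hx : (x : M)⁻¹ * y ∈ Γ := hxy
      have hker' : f ((x : M)⁻¹ * y) = 1 := by
        apply hφker
        have hx1 : φ (x : M) = 1 := x.2
        have hy1 : φ (y : M) = 1 := y.2
        rw [map_mul, map_inv, hx1, hy1]; simp
      have := hker _ hx hker'
      have : (x : M) = y := by
        rw [inv_mul_eq_one] at this; exact this
      exact Subtype.ext this
    exact Finite.of_injective _ hinj
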